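/- Let the top category of a resolvent pair be finite-dimensional modules over a k-algebra, k algebraically closed. If U(V) is a simple object of the bottom category, then Hom_A(R_V, V) is one-dimensional, spanned by the covering map p_V, where (R_V, p_V) is the relatively projective cover of V. -/

import Mathlib

open CategoryTheory CategoryTheory.Limits

universe v u v' u'

/-- A resolvent pair of abelian categories: an adjunction `F ⊣ U` where the right adjoint
`U : A ⥤ B` is additive, exact and faithful. -/
structure ResolventPair (A : Type u) [Category.{v} A] [Abelian A]
    (B : Type u') [Category.{v'} B] [Abelian B] where
  /-- the left adjoint (e.g. induction) -/
  F : B ⥤ A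
  /-- the right adjoint (e.g. restriction), assumed additive, exact and faithful -/
  U : A ⥤ B
  adj : F ⊣ U
  additive : U.Additive
  preservesFiniteLimits : PreservesFiniteLimits U
  preservesFiniteColimits : PreservesFiniteColimits U
  faithful : U.Faithful

namespace ResolventPair

variable {A : Type u} [Category.{v} A] [Abelian A]
  {B : Type u'} [Category.{v'} B] [Abelian B]

/-- A morphism `f` of `A` is allowable if `U f` admits a quasi-inverse `s`,
i.e. `U f ∘ s ∘ U f = U f`. -/
def Allowable (R : ResolventPair A B) {V W : A} (f : V ⟶ W) : Prop :=
  ∃ s : R.U.obj W ⟶ R.U.obj V, R.U.map f ≫ s ≫ R.U.map f = R.U.map f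

/-- An object `P` of `A` is relatively projective if every lifting problem against an
allowable epimorphism can be solved. -/
def RelProjective (R : ResolventPair A B) (P : A) : Prop :=
  ∀ ⦃V W : A⦄ (f : V ⟶ W), Epi f → R.Allowable f →
    ∀ g : P ⟶ W, ∃ h : P ⟶ V, h ≫ f = g

end ResolventPair

open ModuleCat

variable {k : Type u} [Field k] {Aa : Type u} [Ring Aa] [Algebra k Aa]
  {B : Type u'} [Category.{v'} B] [Abelian B]

/-- The inclusion of a submodule, as a morphism in `ModuleCat`. -/
def inclusionHom (P : ModuleCat.{u} Aa) (S : Submodule Aa P) :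
    ModuleCat.of Aa S ⟶ P :=
  ModuleCat.ofHom S.subtype

/-- An allowable epimorphism `π : M → V` is relatively essential if every submodule `S ⊆ M`
on which `π` restricts to an allowable epimorphism equals `M`. -/
def RelEssential (R : ResolventPair (ModuleCat.{u} Aa) B)
    {M V : ModuleCat.{u} Aa} (π : M ⟶ V) : Prop :=
  ∀ S : Submodule Aa M, Epi (inclusionHom M S ≫ π) →
    R.Allowable (inclusionHom M S ≫ π) → S = ⊤

/-- A relatively projective cover of `V` is a relatively projective object together with a
relatively essential allowable epimorphism onto `V`. -/
def IsRelProjCover (R : ResolventPair (ModuleCat.{u} Aa) B)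
    {Rv V : ModuleCat.{u} Aa} (p : Rv ⟶ V) : Prop :=
  R.RelProjective Rv ∧ Epi p ∧ R.Allowable p ∧ RelEssential R p

section AuxLemmas

/-- If the restriction of `p` to a submodule `S` admits a `B`-section, then `S = ⊤`. -/
theorem aux_essential_top (R : ResolventPair (ModuleCat.{u} Aa) B)
    {Rv V : ModuleCat.{u} Aa} (p : Rv ⟶ V) (hess : RelEssential R p)
    (S : Submodule Aa Rv) (t : R.U.obj V ⟶ R.U.obj (ModuleCat.of Aa S))
    (ht : t ≫ R.U.map (inclusionHom Rv S ≫ p) = 𝟙 _) : S = ⊤ := by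
  haveI : R.U.Faithful := R.faithful
  haveI : IsSplitEpi (R.U.map (inclusionHom Rv S ≫ p)) := ⟨⟨⟨t, ht⟩⟩⟩
  have hepi : Epi (inclusionHom Rv S ≫ p) := R.U.epi_of_epi_map inferInstance
  exact hess S hepi ⟨t, by rw [ht, Category.comp_id]⟩

/-- If `v ≫ p` admits a `B`-section, then `v` is surjective (using essentiality). -/
theorem aux_surj (R : ResolventPair (ModuleCat.{u} Aa) B)
    {Rv V : ModuleCat.{u} Aa} (p : Rv ⟶ V) (hess : RelEssential R p)
    (v : Rv ⟶ Rv) (w : R.U.obj V ⟶ R.U.obj Rv)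
    (hw : w ≫ R.U.map (v ≫ p) = 𝟙 (R.U.obj V)) : Function.Surjective v := by
  set S : Submodule Aa Rv := LinearMap.range v.hom with hS
  let vc : Rv ⟶ ModuleCat.of Aa S := ModuleCat.ofHom (LinearMap.rangeRestrict v.hom)
  have hvc : vc ≫ inclusionHom Rv S = v := by ext x; rfl
  have h2 : vc ≫ inclusionHom Rv S ≫ p = v ≫ p := by rw [← Category.assoc, hvc]
  have hST : S = ⊤ := aux_essential_top R p hess S (w ≫ R.U.map vc) (by
    rw [Category.assoc, ← R.U.map_comp, h2, hw])
  rw [hS] at hST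
  exact LinearMap.range_eq_top.mp hST

/-- A surjective endomorphism of a finite-dimensional module is bijective;
combined with `aux_surj`. -/
theorem aux_bij (R : ResolventPair (ModuleCat.{u} Aa) B)
    {Rv V : ModuleCat.{u} Aa} (hRv : FiniteDimensional k Rv)
    (p : Rv ⟶ V) (hess : RelEssential R p)
    (v : Rv ⟶ Rv) (w : R.U.obj V ⟶ R.U.obj Rv)
    (hw : w ≫ R.U.map (v ≫ p) = 𝟙 (R.U.obj V)) : Function.Bijective v := by
  have hsurj : Function.Surjective v := aux_surj R p hess v w hw
  haveI := hRv
  have hinj : Function.Injective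
      (LinearMap.restrictScalars k v.hom) :=
    LinearMap.injective_iff_surjective.mpr hsurj
  exact ⟨hinj, hsurj⟩

/-- If `s` is a section of `U p` and `s ≫ U f = 0` then `f = 0`. -/
theorem aux_zero (R : ResolventPair (ModuleCat.{u} Aa) B)
    {Rv V : ModuleCat.{u} Aa} (p : Rv ⟶ V) (hess : RelEssential R p)
    (s : R.U.obj V ⟶ R.U.obj Rv) (hs : s ≫ R.U.map p = 𝟙 (R.U.obj V))
    (f : Rv ⟶ V) (hf : s ≫ R.U.map f = 0) : f = 0 := by
  haveI := R.additive
  haveI := R.preservesFiniteLimits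
  have hl := KernelFork.mapIsLimit _ (ModuleCat.kernelIsLimit f) R.U
  obtain ⟨t, ht⟩ := KernelFork.IsLimit.lift' hl s hf
  have ht' : t ≫ R.U.map (inclusionHom Rv (LinearMap.ker f.hom)) = s := ht
  have hK : LinearMap.ker f.hom = ⊤ := by
    refine aux_essential_top R p hess (LinearMap.ker f.hom) t ?_
    rw [R.U.map_comp]
    exact (Category.assoc _ _ _).symm.trans ((congrArg (· ≫ R.U.map p) ht').trans hs)
  exact ModuleCat.hom_ext (by rw [LinearMap.ker_eq_top.mp hK, ModuleCat.hom_zero])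

/-- Every nonzero morphism `Rv ⟶ V` is of the form `u ≫ p` with `u` bijective. -/
theorem aux_ml (R : ResolventPair (ModuleCat.{u} Aa) B)
    {Rv V : ModuleCat.{u} Aa} (hRv : FiniteDimensional k Rv)
    (p : Rv ⟶ V) (hcover : IsRelProjCover R p) (hsimple : Simple (R.U.obj V))
    (s : R.U.obj V ⟶ R.U.obj Rv) (hs : s ≫ R.U.map p = 𝟙 (R.U.obj V))
    (f : Rv ⟶ V) (hf : f ≠ 0) :
    ∃ u : Rv ⟶ Rv, Function.Bijective u ∧ u ≫ p = f := by
  obtain ⟨u, hu⟩ := hcover.1 p hcover.2.1 hcover.2.2.1 f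
  have he : s ≫ R.U.map f ≠ 0 := fun h => hf (aux_zero R p hcover.2.2.2 s hs f h)
  haveI := hsimple
  haveI : IsIso (s ≫ R.U.map f) := isIso_of_hom_simple he
  refine ⟨u, ?_, hu⟩
  apply aux_bij R hRv p hcover.2.2.2 u (inv (s ≫ R.U.map f) ≫ s)
  rw [hu, Category.assoc]
  exact IsIso.inv_hom_id _

/-- A non-bijective endomorphism composed with `p` is zero. -/
theorem aux_k (R : ResolventPair (ModuleCat.{u} Aa) B)
    {Rv V : ModuleCat.{u} Aa} (hRv : FiniteDimensional k Rv)
    (p : Rv ⟶ V) (hcover : IsRelProjCover R p) (hsimple : Simple (R.U.obj V))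
    (s : R.U.obj V ⟶ R.U.obj Rv) (hs : s ≫ R.U.map p = 𝟙 (R.U.obj V))
    (a : Rv ⟶ Rv) (ha : ¬ Function.Bijective a) : a ≫ p = 0 := by
  by_contra h
  obtain ⟨t, htb, htp⟩ := aux_ml R hRv p hcover hsimple s hs (a ≫ p) h
  let tE := LinearEquiv.ofBijective t.hom htb
  let tinv : Rv ⟶ Rv := ModuleCat.ofHom tE.symm.toLinearMap
  have h1 : t ≫ tinv = 𝟙 Rv := by
    ext x
    exact tE.symm_apply_apply x
  set v : Rv ⟶ Rv := 𝟙 Rv + tinv ≫ (a - t) with hv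
  have hvp : v ≫ p = p := by
    rw [hv, Preadditive.add_comp, Category.id_comp, Category.assoc,
      Preadditive.sub_comp, htp, sub_self, Limits.comp_zero, add_zero]
  have hvb : Function.Bijective v :=
    aux_bij R hRv p hcover.2.2.2 v s (by rw [hvp]; exact hs)
  have hav : t ≫ v = a := by
    rw [hv, Preadditive.comp_add, Category.comp_id, ← Category.assoc, h1,
      Category.id_comp]
    abel
  apply ha
  rw [← hav]
  have hcoe : ⇑(t ≫ v) = ⇑v ∘ ⇑t := rfl
  rw [hcoe]
  exact hvb.comp htb

end AuxLemmas

/-- Let the top category of a resolvent pair be the category of finite-dimensional modules over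
a `k`-algebra, `k` algebraically closed.  If `U V` is a simple object of the bottom category
and `(R_V, p_V)` is a relatively projective cover of `V`, then `Hom(R_V, V)` is
one-dimensional, spanned by the covering map `p_V`. -/
theorem hom_relProjCover_one_dimensional [IsAlgClosed k]
    (R : ResolventPair (ModuleCat.{u} Aa) B)
    (V Rv : ModuleCat.{u} Aa) (hV : FiniteDimensional k V)
    (hRv : FiniteDimensional k Rv)
    (hGV : FiniteDimensional k (R.F.obj (R.U.obj V)))
    (p : Rv ⟶ V) (hcover : IsRelProjCover R p)
    (hsimple : Simple (R.U.obj V)) :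
    p ≠ 0 ∧ ∀ f : Rv ⟶ V, ∃ c : k, f = c • p := by
  haveI := hsimple
  haveI := R.additive
  have hid : 𝟙 V ≠ 0 := by
    intro h
    apply id_nonzero (R.U.obj V)
    rw [← R.U.map_id, h, Functor.map_zero]
  have hp0 : p ≠ 0 := by
    intro hp
    apply hid
    haveI := hcover.2.1
    rw [← cancel_epi p, Category.comp_id, hp, Limits.comp_zero]
  refine ⟨hp0, ?_⟩
  -- obtain a section `s` of `U p`
  obtain ⟨s, hs0⟩ := hcover.2.2.1
  haveI := R.preservesFiniteColimits
  haveI := hcover.2.1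
  haveI : Epi (R.U.map p) := R.U.map_epi p
  have hs : s ≫ R.U.map p = 𝟙 (R.U.obj V) := by
    rw [← cancel_epi (R.U.map p), Category.comp_id]
    exact hs0
  -- nontriviality
  have hxV : ∃ x : V, x ≠ 0 := by
    by_contra hx
    push_neg at hx
    apply hid
    ext x
    simp [hx x]
  obtain ⟨x0, hx0⟩ := hxV
  haveI : Nontrivial V := ⟨⟨x0, 0, hx0⟩⟩
  obtain ⟨y0, hy0⟩ := (ModuleCat.epi_iff_surjective p).mp hcover.2.1 x0
  haveI : Nontrivial Rv := ⟨⟨y0, 0, fun h => hx0 (by rw [← hy0, h, map_zero])⟩⟩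
  haveI := hRv
  intro f
  obtain ⟨u, hu⟩ := hcover.1 p hcover.2.1 hcover.2.2.1 f
  obtain ⟨c, hc⟩ :=
    Module.End.exists_eigenvalue (LinearMap.restrictScalars k u.hom)
  obtain ⟨xe, hxe⟩ := hc.exists_hasEigenvector
  refine ⟨c, ?_⟩
  have hux : u xe = c • xe := hxe.apply_eq_smul
  have h0 : (u - c • 𝟙 Rv) xe = 0 := by
    show u xe - c • xe = 0
    rw [hux, sub_self]
  have hna : ¬ Function.Bijective (u - c • 𝟙 Rv) := by
    intro hb
    exact hxe.right (hb.injective (by rw [h0, map_zero]))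
  have hK := aux_k R hRv p hcover hsimple s hs (u - c • 𝟙 Rv) hna
  rw [Preadditive.sub_comp, hu, Linear.smul_comp, Category.id_comp] at hK
  exact sub_eq_zero.mp hK
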